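/- Symmetrization lower bound: Suppose D = D_1 × ... × D_n is a product distribution whose single-item marginals are pairwise at distance at least c apart (δ(D_i, D_j) ≥ c for all i ≠ j, where δ is a metric on single-item distributions). Then for any product distribution D' that is symmetric with respect to an item-permutation group Σ of partition size s (so D' has at most s distinct marginals), the total marginal-matching error Σ_i δ(D_i, D'_i) is at least (n - s)·c/2. -/
import Mathlib


open scoped BigOperators

/-- Symmetrization lower bound: if the marginals `D i` are pairwise at distance at
least `c`, and `D'` is constant on each part of a partition of `[n]` into `s` parts
(i.e. symmetric with respect to an item-permutation group of partition size `s`),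
then `Σ_i dist (D i) (D' i) ≥ (n - s)·c/2`. -/
theorem stmt13 {α : Type*} [MetricSpace α] (n s : ℕ)
    (P : Fin s → Finset (Fin n))
    (hdisj : ∀ x y, x ≠ y → Disjoint (P x) (P y))
    (hcov : Finset.univ.biUnion P = Finset.univ)
    (D D' : Fin n → α) (c : ℝ) (hc : 0 ≤ c)
    (hsep : ∀ i j, i ≠ j → c ≤ dist (D i) (D j))
    (hsym : ∀ x, ∀ i ∈ P x, ∀ j ∈ P x, D' i = D' j) :
    ((n : ℝ) - s) * c / 2 ≤ ∑ i, dist (D i) (D' i) := by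
  have hpd : Set.PairwiseDisjoint (Finset.univ : Finset (Fin s)) P := by
    intro x _ y _ hxy
    exact hdisj x y hxy
  -- per-part bound
  have hpart : ∀ x : Fin s,
      ((P x).card - 1 : ℝ) * c / 2 ≤ ∑ i ∈ P x, dist (D i) (D' i) := by
    intro x
    set S := P x with hS
    set B := S.filter (fun i => dist (D i) (D' i) < c / 2) with hB
    have hBcard : B.card ≤ 1 := by
      rw [Finset.card_le_one]
      intro i hi j hj
      by_contra hne
      rw [Finset.mem_filter] at hi hj
      have hij : D' i = D' j := hsym x i hi.1 j hj.1
      have h1 : dist (D i) (D j) ≤ dist (D i) (D' i) + dist (D' j) (D j) := by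
        calc dist (D i) (D j) ≤ dist (D i) (D' i) + dist (D' i) (D j) :=
              dist_triangle _ _ _
          _ = dist (D i) (D' i) + dist (D' j) (D j) := by rw [hij]
      have h2 : dist (D' j) (D j) = dist (D j) (D' j) := dist_comm _ _
      have := hsep i j hne
      linarith [hi.2, hj.2]
    have hsub : B ⊆ S := Finset.filter_subset _ _
    have hlow : ∀ i ∈ S \ B, c / 2 ≤ dist (D i) (D' i) := by
      intro i hi
      rw [Finset.mem_sdiff, hB, Finset.mem_filter] at hi
      push_neg at hi
      exact hi.2 hi.1
    have h3 : ((S \ B).card : ℝ) * (c / 2) ≤ ∑ i ∈ S \ B, dist (D i) (D' i) := by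
      calc ((S \ B).card : ℝ) * (c / 2) = ∑ _i ∈ S \ B, c / 2 := by
            rw [Finset.sum_const, nsmul_eq_mul]
        _ ≤ ∑ i ∈ S \ B, dist (D i) (D' i) := Finset.sum_le_sum hlow
    have h4 : ∑ i ∈ S \ B, dist (D i) (D' i) ≤ ∑ i ∈ S, dist (D i) (D' i) :=
      Finset.sum_le_sum_of_subset_of_nonneg (Finset.sdiff_subset)
        (fun i _ _ => dist_nonneg)
    have hcard : (S.card : ℝ) - 1 ≤ ((S \ B).card : ℝ) := by
      have : (S \ B).card = S.card - B.card := Finset.card_sdiff_of_subset hsub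
      have hBS : B.card ≤ S.card := Finset.card_le_card hsub
      rw [this]
      push_cast [Nat.cast_sub hBS]
      have : (B.card : ℝ) ≤ 1 := by exact_mod_cast hBcard
      linarith
    have : ((S.card : ℝ) - 1) * (c / 2) ≤ ((S \ B).card : ℝ) * (c / 2) := by
      apply mul_le_mul_of_nonneg_right hcard (by linarith)
    calc ((S.card : ℝ) - 1) * c / 2 = ((S.card : ℝ) - 1) * (c / 2) := by ring
      _ ≤ ((S \ B).card : ℝ) * (c / 2) := this
      _ ≤ ∑ i ∈ S \ B, dist (D i) (D' i) := h3
      _ ≤ ∑ i ∈ S, dist (D i) (D' i) := h4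
  have hsum : ∑ i, dist (D i) (D' i) = ∑ x, ∑ i ∈ P x, dist (D i) (D' i) := by
    rw [← Finset.sum_biUnion hpd, hcov]
  have hcardn : ∑ x, ((P x).card : ℝ) = n := by
    have : ∑ x, (P x).card = n := by
      rw [← Finset.card_biUnion (fun x _ y _ h => hdisj x y h), hcov,
        Finset.card_univ, Fintype.card_fin]
    exact_mod_cast this
  have htot : ∑ x, (((P x).card : ℝ) - 1) * c / 2 ≤ ∑ x, ∑ i ∈ P x, dist (D i) (D' i) :=
    Finset.sum_le_sum fun x _ => hpart x
  have : ∑ x : Fin s, (((P x).card : ℝ) - 1) * c / 2 = ((n : ℝ) - s) * c / 2 := by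
    rw [← Finset.sum_div, ← Finset.sum_mul]
    congr 2
    rw [Finset.sum_sub_distrib, hcardn, Finset.sum_const, Finset.card_univ,
      Fintype.card_fin, nsmul_eq_mul, mul_one]
  rw [hsum]
  linarith
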